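/- Let γ, δ, N be complex numbers and set γ̃ := γ − (5/2)Nδ. Define P₁ := (γ − (2N + 3)δ − (N + 1/2)(N + 3/2))·(γ − 3(N − 1)δ − 3/4) and P₂ := (γ − 3(N + 1)δ − 3/4)·(γ − (2N − 3)δ − (N − 1/2)(N − 3/2)). If P₁ − P₂ ≠ 0, then 4γ̃ − 6δ² + 4Nδ − 3 ≠ 0 and −2N·(P₁ + P₂)/(P₁ − P₂) = [4γ̃² − (N² + 36)δ² − 2(2N² + 3)γ̃ + 2N(N² − 12)δ + 3(N² + 3/4)] / [4γ̃ − 6δ² + 4Nδ − 3]. -/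

import Mathlib

/-- The modified lacunary length-4 invariant `M̃¹_n` in the coordinate
`γ̃₈ = γ − (5/2)N₈δ` (here `N = N₈ = n + 3/2`): with `P₁` and `P₂` the two
products appearing in `M¹_n`, if `P₁ − P₂ ≠ 0` then `4γ̃ − 6δ² + 4Nδ − 3 ≠ 0`
and `−2N(P₁ + P₂)/(P₁ − P₂)` equals the stated ratio. -/
theorem M1_tilde (γ δ N γt P₁ P₂ : ℂ)
    (hγt : γt = γ - (5/2) * N * δ)
    (hP₁ : P₁ = (γ - (2 * N + 3) * δ - (N + 1/2) * (N + 3/2)) * (γ - 3 * (N - 1) * δ - 3/4))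
    (hP₂ : P₂ = (γ - 3 * (N + 1) * δ - 3/4) * (γ - (2 * N - 3) * δ - (N - 1/2) * (N - 3/2)))
    (h : P₁ - P₂ ≠ 0) :
    4 * γt - 6 * δ ^ 2 + 4 * N * δ - 3 ≠ 0 ∧
    -2 * N * (P₁ + P₂) / (P₁ - P₂) =
      (4 * γt ^ 2 - (N ^ 2 + 36) * δ ^ 2 - 2 * (2 * N ^ 2 + 3) * γt +
          2 * N * (N ^ 2 - 12) * δ + 3 * (N ^ 2 + 3/4)) /
        (4 * γt - 6 * δ ^ 2 + 4 * N * δ - 3) := by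
  have key : P₁ - P₂ = (-N) * (4 * γt - 6 * δ ^ 2 + 4 * N * δ - 3) := by
    subst hγt hP₁ hP₂; ring
  have hden : 4 * γt - 6 * δ ^ 2 + 4 * N * δ - 3 ≠ 0 := by
    intro h0; apply h; rw [key, h0, mul_zero]
  have hN : N ≠ 0 := by
    intro h0; apply h; rw [key, h0]; ring
  refine ⟨hden, ?_⟩
  have hnum : 4 * γt ^ 2 - (N ^ 2 + 36) * δ ^ 2 - 2 * (2 * N ^ 2 + 3) * γt +
      2 * N * (N ^ 2 - 12) * δ + 3 * (N ^ 2 + 3/4) = 2 * (P₁ + P₂) := by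
    subst hγt hP₁ hP₂; ring
  rw [hnum, key]
  field_simp
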